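/- Let σ be a positive definite density matrix on ℂⁿ and let E be the quantum erasure channel E(X) = Tr(X)·σ on n×n complex matrices (which is completely positive and trace-preserving, with adjoint E†(Y) = Tr(σY)·I). Then for every density matrix γ and every density matrix ω, the Petz recovery map satisfies P_{E,γ}(ω) = γ; in particular, for any target density ρ, choosing γ = ρ solves the quantum prior hacking problem P_{E,γ}(ω) = ρ. -/

import Mathlib

open Matrix BigOperators
open scoped ComplexOrder Classical

/-- Positive-semidefinite matrix square root (0 if the matrix is not psd). -/
noncomputable def msqrt {n : ℕ} (A : Matrix (Fin n) (Fin n) ℂ) : Matrix (Fin n) (Fin n) ℂ :=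
  if h : A.PosSemidef then
    (h.1.eigenvectorUnitary : Matrix (Fin n) (Fin n) ℂ) *
      diagonal ((↑) ∘ (√·) ∘ h.1.eigenvalues) *
      (star h.1.eigenvectorUnitary : Matrix (Fin n) (Fin n) ℂ)
  else 0

/-- Density matrix: positive semidefinite with trace 1. -/
def IsDensity {n : ℕ} (ρ : Matrix (Fin n) (Fin n) ℂ) : Prop :=
  ρ.PosSemidef ∧ ρ.trace = 1

/-- The quantum erasure channel `E(X) = Tr(X) • σ`. -/
noncomputable def eraseChan {n : ℕ} (σ X : Matrix (Fin n) (Fin n) ℂ) :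
    Matrix (Fin n) (Fin n) ℂ := X.trace • σ

/-- Its Hilbert–Schmidt adjoint `E†(Y) = Tr(σ Y) • I`. -/
noncomputable def eraseChanAdj {n : ℕ} (σ Y : Matrix (Fin n) (Fin n) ℂ) :
    Matrix (Fin n) (Fin n) ℂ := (σ * Y).trace • (1 : Matrix (Fin n) (Fin n) ℂ)

lemma msqrt_mul_self {n : ℕ} {A : Matrix (Fin n) (Fin n) ℂ} (h : A.PosSemidef) :
    msqrt A * msqrt A = A := by
  rw [msqrt, dif_pos h]
  have hU : (star h.1.eigenvectorUnitary : Matrix (Fin n) (Fin n) ℂ) *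
      (h.1.eigenvectorUnitary : Matrix (Fin n) (Fin n) ℂ) = 1 := Unitary.coe_star_mul_self _
  have hD : diagonal (((↑) ∘ (√·) ∘ h.1.eigenvalues : Fin n → ℂ)) *
      diagonal ((↑) ∘ (√·) ∘ h.1.eigenvalues) = diagonal (RCLike.ofReal ∘ h.1.eigenvalues) := by
    rw [diagonal_mul_diagonal]
    congr 1
    funext i
    simp only [Function.comp_apply]
    rw [← Complex.ofReal_mul, Real.mul_self_sqrt (h.eigenvalues_nonneg i)]
    rfl
  conv_rhs => rw [h.1.spectral_theorem, Unitary.conjStarAlgAut_apply]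
  calc _ = (h.1.eigenvectorUnitary : Matrix (Fin n) (Fin n) ℂ) *
        (diagonal ((↑) ∘ (√·) ∘ h.1.eigenvalues) *
        ((star h.1.eigenvectorUnitary : Matrix (Fin n) (Fin n) ℂ) *
        (h.1.eigenvectorUnitary : Matrix (Fin n) (Fin n) ℂ)) *
        diagonal ((↑) ∘ (√·) ∘ h.1.eigenvalues)) *
        (star h.1.eigenvectorUnitary : Matrix (Fin n) (Fin n) ℂ) := by
          simp only [Matrix.mul_assoc]
    _ = _ := by rw [hU, Matrix.mul_one, hD]

theorem quantum_erasure_petz_is_erasure_to_prior {n : ℕ}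
    (σ : Matrix (Fin n) (Fin n) ℂ) (hσpd : σ.PosDef) (hσ : IsDensity σ) :
    ∀ γ ω : Matrix (Fin n) (Fin n) ℂ, IsDensity γ → IsDensity ω →
      msqrt γ *
        eraseChanAdj σ
          ((msqrt (eraseChan σ γ))⁻¹ * ω * (msqrt (eraseChan σ γ))⁻¹) *
        msqrt γ = γ := by
  intro γ ω hγ hω
  have hE : eraseChan σ γ = σ := by
    simp [eraseChan, hγ.2]
  rw [hE]
  set S := msqrt σ with hS
  have hSS : S * S = σ := by rw [hS]; exact msqrt_mul_self hσ.1
  have hdet : S.det ≠ 0 := by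
    intro h
    have : σ.det = 0 := by rw [← hSS, det_mul, h, mul_zero]
    exact hσpd.det_pos.ne' this
  have hinv : IsUnit S.det := isUnit_iff_ne_zero.2 hdet
  have h1 : S⁻¹ * σ * S⁻¹ = 1 := by
    rw [← hSS, ← mul_assoc, mul_assoc (S⁻¹ * S),
      nonsing_inv_mul S hinv, mul_nonsing_inv S hinv, one_mul]
  have htr : (σ * (S⁻¹ * ω * S⁻¹)).trace = 1 := by
    have : σ * (S⁻¹ * ω * S⁻¹) = (σ * S⁻¹) * ω * S⁻¹ := by
      noncomm_ring
    rw [this, trace_mul_cycle, ← mul_assoc, h1, one_mul, hω.2]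
  have hGG : msqrt γ * msqrt γ = γ := by
    exact msqrt_mul_self hγ.1
  rw [eraseChanAdj, htr, one_smul, mul_one, hGG]
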